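/- Let 𝒞 be a path cover of a geometry (G, I, O) with successor function f and natural pre-order ≼. Then ≼ is antisymmetric (hence a partial order) if and only if 𝒞 has no vicious circuit. -/

import Mathlib

namespace OneWayFlow

variable {V : Type}

/-- A flow `(f, ≼)` on a geometry `(G, I, O)`: `f` maps `Oᶜ` into `Iᶜ` (encoded as a total
function whose values only matter on `Oᶜ`), `le` is a partial order on `V(G)`, and the flow
conditions (i)-(iii) hold. -/
structure Flow (G : SimpleGraph V) (I O : Set V) where
  f : V → V
  le : V → V → Prop
  le_refl : ∀ x, le x x
  le_trans : ∀ x y z, le x y → le y z → le x z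
  le_antisymm : ∀ x y, le x y → le y x → x = y
  f_notMem : ∀ x, x ∉ O → f x ∉ I
  adj : ∀ x, x ∉ O → G.Adj x (f x)
  le_f : ∀ x, x ∉ O → le x (f x)
  le_nbr : ∀ x, x ∉ O → ∀ y, G.Adj y (f x) → le x y

/-- A path cover of a geometry `(G, I, O)`, encoded by its successor function: the arcs of the
cover are exactly `x → succ x` for `x ∉ O`.  Every vertex lies on exactly one maximal directed
path of the resulting functional digraph; `succ_notMem` says vertices of `I` have in-degree `0`
(paths meet `I` only at their initial point), totality of `succ` on `Oᶜ` together with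
`acyclic` says paths meet `O` exactly at their final point. -/
structure PathCover (G : SimpleGraph V) (I O : Set V) where
  succ : V → V
  adj : ∀ x, x ∉ O → G.Adj x (succ x)
  inj : ∀ x, x ∉ O → ∀ y, y ∉ O → succ x = succ y → x = y
  succ_notMem : ∀ x, x ∉ O → succ x ∉ I
  acyclic : ∀ x, ¬ Relation.TransGen (fun a b => a ∉ O ∧ b = succ a) x x

/-- `x → y` is an arc of (some path of) the path cover `C`. -/
def PathCover.Arc {G : SimpleGraph V} {I O : Set V} (C : PathCover G I O) (x y : V) : Prop :=
  x ∉ O ∧ y = C.succ x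

/-- A single segment of an influencing walk for `C`: either an arc `x → f(x)` of `C`, or
`x → f(x) → y` where the edge `y·f(x)` of `G` is not covered by `C`. -/
def PathCover.Seg {G : SimpleGraph V} {I O : Set V} (C : PathCover G I O) (x y : V) : Prop :=
  C.Arc x y ∨ ∃ w, C.Arc x w ∧ G.Adj y w ∧ ¬ C.Arc y w ∧ ¬ C.Arc w y

/-- There is an influencing walk for `C` from `x` to `y` (a concatenation of zero or more
segments). -/
def PathCover.InflWalk {G : SimpleGraph V} {I O : Set V} (C : PathCover G I O) :
    V → V → Prop :=
  Relation.ReflTransGen C.Seg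

/-- `C` has a vicious circuit: a closed influencing walk with at least one segment. -/
def PathCover.Vicious {G : SimpleGraph V} {I O : Set V} (C : PathCover G I O) : Prop :=
  ∃ x, Relation.TransGen C.Seg x x

/-- The natural pre-order for the successor function of `C`: the reflexive-transitive closure
of the relations `x ≼ f(x)` (for `x ∉ O`) and `x ≼ y` whenever `y ~ f(x)`. -/
def PathCover.NatPre {G : SimpleGraph V} {I O : Set V} (C : PathCover G I O) :
    V → V → Prop :=
  Relation.ReflTransGen (fun x y => x ∉ O ∧ (y = C.succ x ∨ G.Adj y (C.succ x)))

lemma PathCover.seg_irrefl {G : SimpleGraph V} {I O : Set V} (C : PathCover G I O) (x : V) :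
    ¬ C.Seg x x := by
  rintro (⟨hxO, hx⟩ | ⟨w, hArc, _, hn1, _⟩)
  · exact C.acyclic x (Relation.TransGen.single ⟨hxO, hx⟩)
  · exact hn1 hArc

lemma PathCover.seg_to_R {G : SimpleGraph V} {I O : Set V} (C : PathCover G I O) {x y : V}
    (h : C.Seg x y) : x ∉ O ∧ (y = C.succ x ∨ G.Adj y (C.succ x)) := by
  rcases h with ⟨hxO, hx⟩ | ⟨w, ⟨hxO, hw⟩, hadj, _, _⟩
  · exact ⟨hxO, Or.inl hx⟩
  · exact ⟨hxO, Or.inr (hw ▸ hadj)⟩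

lemma PathCover.R_to_segs {G : SimpleGraph V} {I O : Set V} (C : PathCover G I O) {x y : V}
    (h : x ∉ O ∧ (y = C.succ x ∨ G.Adj y (C.succ x))) :
    Relation.ReflTransGen C.Seg x y := by
  obtain ⟨hxO, hy | hy⟩ := h
  · exact Relation.ReflTransGen.single (Or.inl ⟨hxO, hy⟩)
  · by_cases h1 : C.Arc y (C.succ x)
    · obtain ⟨hyO, hsy⟩ := h1
      have : x = y := C.inj x hxO y hyO hsy
      exact this ▸ Relation.ReflTransGen.refl
    · by_cases h2 : C.Arc (C.succ x) y
      · exact Relation.ReflTransGen.tail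
          (Relation.ReflTransGen.single (Or.inl ⟨hxO, rfl⟩)) (Or.inl h2)
      · exact Relation.ReflTransGen.single (Or.inr ⟨C.succ x, ⟨hxO, rfl⟩, hy, h1, h2⟩)

lemma PathCover.natPre_to_segs {G : SimpleGraph V} {I O : Set V} (C : PathCover G I O)
    {x y : V} (h : C.NatPre x y) : Relation.ReflTransGen C.Seg x y := by
  induction h with
  | refl => exact Relation.ReflTransGen.refl
  | tail _ hstep ih => exact ih.trans (C.R_to_segs hstep)

/-- Let `𝒞` be a path cover of `(G, I, O)` with natural pre-order `≼`.
Then `≼` is antisymmetric (hence a partial order) iff `𝒞` has no vicious circuit. -/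
theorem natPre_antisymm_iff_no_vicious [Fintype V] (G : SimpleGraph V) (I O : Set V)
    (C : PathCover G I O) :
    (∀ x y, C.NatPre x y → C.NatPre y x → x = y) ↔ ¬ C.Vicious := by
  constructor
  · rintro H ⟨x, hx⟩
    cases hx with
    | single hxx => exact C.seg_irrefl x hxx
    | tail htg hstep =>
      rename_i b
      have hnp1 : C.NatPre x b :=
        Relation.ReflTransGen.mono (fun a b h => C.seg_to_R h) x b htg.to_reflTransGen
      have hnp2 : C.NatPre b x := Relation.ReflTransGen.single (C.seg_to_R hstep)
      have : x = b := H x b hnp1 hnp2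
      exact C.seg_irrefl x (this ▸ hstep)
  · intro hnv x y hxy hyx
    by_contra hne
    have h1 := C.natPre_to_segs hxy
    have h2 := C.natPre_to_segs hyx
    rcases h1.cases_head with rfl | ⟨c, hxc, hcy⟩
    · exact hne rfl
    · exact hnv ⟨x, Relation.TransGen.head' hxc (hcy.trans h2)⟩

end OneWayFlow
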